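/- For every γ > 0 there exists a positive integer n such that with F uniform on [0,1] and H(p) = p^n, the tCPA no-commitment revenue E_v[T*(v)H(v)] exceeds γ times the mCPA no-commitment revenue E_v[b*(v)H(b*(v))]. -/
import Mathlib


open Set intervalIntegral

theorem stmt7 : ∀ γ : ℝ, 0 < γ → ∃ n : ℕ, 0 < n ∧
    (∫ v in (0:ℝ)..1, ((n : ℝ) * v / (n + 1)) * v ^ n) >
      γ * ∫ v in (0:ℝ)..1, (v / (n + 1)) * (v / (n + 1)) ^ n := by
  intro γ hγ
  obtain ⟨n, hn⟩ := exists_nat_gt γ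
  refine ⟨n + 1, Nat.succ_pos n, ?_⟩
  set m : ℕ := n + 1 with hm
  have hmpos : (0:ℝ) < (m:ℝ) := by positivity
  have hm1 : (0:ℝ) < (m:ℝ) + 1 := by positivity
  have h1 : (∫ v in (0:ℝ)..1, ((m : ℝ) * v / (m + 1)) * v ^ m)
      = ((m:ℝ)/(m+1)) * ((1:ℝ)/(m+2)) := by
    have : ∀ v : ℝ, ((m : ℝ) * v / (m + 1)) * v ^ m = ((m:ℝ)/(m+1)) * v ^ (m+1) := by
      intro v; ring
    simp_rw [this]
    rw [intervalIntegral.integral_const_mul, integral_pow]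
    push_cast
    ring
  have h2 : (∫ v in (0:ℝ)..1, (v / (m + 1)) * (v / (m + 1)) ^ m)
      = (1/((m:ℝ)+1)^(m+1)) * ((1:ℝ)/(m+2)) := by
    have : ∀ v : ℝ, (v / ((m:ℝ) + 1)) * (v / (m + 1)) ^ m
        = (1/((m:ℝ)+1)^(m+1)) * v ^ (m+1) := by
      intro v
      rw [div_pow]
      field_simp
      ring
    simp_rw [this]
    rw [intervalIntegral.integral_const_mul, integral_pow]
    push_cast
    ring
  rw [h1, h2]
  have hpow : ((m:ℝ)+1)^(m+1) ≥ (m:ℝ)+1 := by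
    calc ((m:ℝ)+1)^(m+1) ≥ ((m:ℝ)+1)^1 := by
            apply pow_le_pow_right₀ (by linarith) (by omega)
      _ = (m:ℝ)+1 := pow_one _
  have hγm : γ < (m:ℝ) := by
    have : (n:ℝ) ≤ (m:ℝ) := by exact_mod_cast Nat.le_succ n
    linarith
  have key : γ * (1/((m:ℝ)+1)^(m+1)) < (m:ℝ)/((m:ℝ)+1) := by
    rw [mul_one_div, div_lt_div_iff₀ (by positivity) hm1]
    calc γ * ((m:ℝ)+1) < (m:ℝ) * ((m:ℝ)+1) := by
          exact mul_lt_mul_of_pos_right hγm hm1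
      _ ≤ (m:ℝ) * ((m:ℝ)+1)^(m+1) := by
          exact mul_le_mul_of_nonneg_left hpow (le_of_lt hmpos)
  have h2pos : (0:ℝ) < (1:ℝ)/((m:ℝ)+2) := by positivity
  calc γ * ((1/((m:ℝ)+1)^(m+1)) * ((1:ℝ)/(m+2)))
      = (γ * (1/((m:ℝ)+1)^(m+1))) * ((1:ℝ)/(m+2)) := by ring
    _ < ((m:ℝ)/((m:ℝ)+1)) * ((1:ℝ)/(m+2)) := mul_lt_mul_of_pos_right key h2pos
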